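/- Let f : (0,∞) → (0,∞) be nonincreasing (representing t ↦ p_t(0)) and suppose Θ := sup_{t>0} f(t/2)/f(t) < ∞. Then for all t > 0: f(t) · ∫₀ᵗ f(r) dr ≤ ∫₀ᵗ f(t−s) f(s) ds ≤ 2Θ · f(t) · ∫₀ᵗ f(r) dr. -/

import Mathlib

open MeasureTheory Real Set

/-- key convolution estimate for a nonincreasing positive `f` with
doubling constant `Θ`: `f(t)∫₀ᵗ f ≤ ∫₀ᵗ f(t-s)f(s) ds ≤ 2Θ f(t)∫₀ᵗ f`. -/
theorem stmt4 (f : ℝ → ℝ) (hpos : ∀ t > (0:ℝ), 0 < f t)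
    (hmono : ∀ s t : ℝ, 0 < s → s ≤ t → f t ≤ f s)
    (Θ : ℝ) (hΘ : ∀ t > (0:ℝ), f (t / 2) ≤ Θ * f t)
    (hint : ∀ t > (0:ℝ), IntegrableOn f (Set.Ioo 0 t)) :
    ∀ t > (0:ℝ),
      f t * (∫ r in Set.Ioo (0:ℝ) t, f r) ≤ (∫ s in Set.Ioo (0:ℝ) t, f (t - s) * f s)
      ∧ (∫ s in Set.Ioo (0:ℝ) t, f (t - s) * f s)
          ≤ 2 * Θ * (f t * ∫ r in Set.Ioo (0:ℝ) t, f r) := by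
  intro t ht
  have ht2 : (0:ℝ) < t / 2 := by linarith
  have hht : t / 2 ≤ t := by linarith
  have hft : 0 < f t := hpos t ht
  have hf2 : 0 < f (t / 2) := hpos _ ht2
  have hΘft : 0 ≤ Θ * f t := le_trans hf2.le (hΘ t ht)
  have hf : IntegrableOn f (Ioo 0 t) := hint t ht
  have hfnn : 0 ≤ᵐ[volume.restrict (Ioo (0:ℝ) t)] f := by
    filter_upwards [ae_restrict_mem measurableSet_Ioo] with s hs
    exact (hpos s hs.1).le
  have hfI : IntervalIntegrable f volume 0 t :=
    (intervalIntegrable_iff_integrableOn_Ioo_of_le ht.le).2 hf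
  have hreflI : IntervalIntegrable (fun s => f (t - s)) volume 0 t := by
    have h := (hfI.comp_sub_left t).symm
    simpa using h
  have hrefl : IntegrableOn (fun s => f (t - s)) (Ioo 0 t) :=
    (intervalIntegrable_iff_integrableOn_Ioo_of_le ht.le).1 hreflI
  have hgm : AEStronglyMeasurable (fun s => f (t - s) * f s)
      (volume.restrict (Ioo (0:ℝ) t)) :=
    hrefl.aestronglyMeasurable.mul hf.aestronglyMeasurable
  have hbound : IntegrableOn (fun s => Θ * f t * (f s + f (t - s))) (Ioo 0 t) :=
    (hf.add hrefl).const_mul _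
  have hgint : IntegrableOn (fun s => f (t - s) * f s) (Ioo 0 t) := by
    refine hbound.mono' hgm ?_
    filter_upwards [ae_restrict_mem measurableSet_Ioo] with s hs
    have hs0 := hs.1; have hst := hs.2
    have hts : (0:ℝ) < t - s := by linarith
    have hfs := hpos s hs0
    have hfts := hpos _ hts
    rw [Real.norm_eq_abs, abs_of_pos (mul_pos hfts hfs)]
    rcases le_total s (t / 2) with h | h
    · have h2 : f (t - s) ≤ Θ * f t :=
        (hmono _ _ ht2 (by linarith)).trans (hΘ t ht)
      nlinarith [mul_nonneg hΘft hfts.le, mul_le_mul_of_nonneg_right h2 hfs.le]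
    · have h2 : f s ≤ Θ * f t :=
        (hmono _ _ ht2 h).trans (hΘ t ht)
      nlinarith [mul_nonneg hΘft hfs.le, mul_le_mul_of_nonneg_left h2 hfts.le]
  -- lower bound
  have hlow : f t * ∫ r in Ioo (0:ℝ) t, f r ≤ ∫ s in Ioo (0:ℝ) t, f (t - s) * f s := by
    rw [← integral_const_mul]
    refine setIntegral_mono_on (hf.const_mul _) hgint measurableSet_Ioo ?_
    intro s hs
    have h1 : f t ≤ f (t - s) :=
      hmono _ _ (by linarith [hs.2]) (by linarith [hs.1])
    exact mul_le_mul_of_nonneg_right h1 (hpos s hs.1).le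
  -- split
  have hg1 : IntegrableOn (fun s => f (t - s) * f s) (Ioc 0 (t/2)) :=
    (integrableOn_Ioc_iff_integrableOn_Ioo).2
      (hgint.mono_set (Ioo_subset_Ioo le_rfl hht))
  have hg2 : IntegrableOn (fun s => f (t - s) * f s) (Ioc (t/2) t) :=
    (integrableOn_Ioc_iff_integrableOn_Ioo).2
      (hgint.mono_set (Ioo_subset_Ioo ht2.le le_rfl))
  have hsplit : (∫ s in Ioo (0:ℝ) t, f (t - s) * f s)
      = (∫ s in Ioo (0:ℝ) (t/2), f (t - s) * f s)
        + ∫ s in Ioo (t/2) t, f (t - s) * f s := by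
    rw [← integral_Ioc_eq_integral_Ioo, ← integral_Ioc_eq_integral_Ioo,
      ← integral_Ioc_eq_integral_Ioo, ← Set.Ioc_union_Ioc_eq_Ioc ht2.le hht,
      setIntegral_union (Set.Ioc_disjoint_Ioc_of_le le_rfl) measurableSet_Ioc hg1 hg2]
  -- `∫ f` over subinterval
  have h3 : (∫ s in Ioo (0:ℝ) (t/2), f s) ≤ ∫ r in Ioo (0:ℝ) t, f r :=
    setIntegral_mono_set hf hfnn
      (HasSubset.Subset.eventuallyLE (Ioo_subset_Ioo le_rfl hht))
  -- reflection identity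
  have hreflint : (∫ s in Ioo (t/2) t, f (t - s)) = ∫ r in Ioo (0:ℝ) (t/2), f r := by
    rw [← integral_Ioc_eq_integral_Ioo, ← integral_Ioc_eq_integral_Ioo,
      ← intervalIntegral.integral_of_le hht, ← intervalIntegral.integral_of_le ht2.le,
      intervalIntegral.integral_comp_sub_left f t, sub_self,
      show t - t/2 = t/2 by ring]
  -- piece A
  have hA : (∫ s in Ioo (0:ℝ) (t/2), f (t - s) * f s)
      ≤ Θ * f t * ∫ r in Ioo (0:ℝ) t, f r := by
    have h1 : (∫ s in Ioo (0:ℝ) (t/2), f (t - s) * f s)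
        ≤ ∫ s in Ioo (0:ℝ) (t/2), Θ * f t * f s := by
      refine setIntegral_mono_on (hgint.mono_set (Ioo_subset_Ioo le_rfl hht))
        ((hf.mono_set (Ioo_subset_Ioo le_rfl hht)).const_mul _) measurableSet_Ioo ?_
      intro s hs
      have h2 : f (t - s) ≤ Θ * f t :=
        (hmono _ _ ht2 (by linarith [hs.2])).trans (hΘ t ht)
      exact mul_le_mul_of_nonneg_right h2 (hpos s hs.1).le
    rw [integral_const_mul] at h1
    exact h1.trans (mul_le_mul_of_nonneg_left h3 hΘft)
  -- piece B
  have hB : (∫ s in Ioo (t/2) t, f (t - s) * f s)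
      ≤ Θ * f t * ∫ r in Ioo (0:ℝ) t, f r := by
    have h1 : (∫ s in Ioo (t/2) t, f (t - s) * f s)
        ≤ ∫ s in Ioo (t/2) t, Θ * f t * f (t - s) := by
      refine setIntegral_mono_on (hgint.mono_set (Ioo_subset_Ioo ht2.le le_rfl))
        ((hrefl.mono_set (Ioo_subset_Ioo ht2.le le_rfl)).const_mul _) measurableSet_Ioo ?_
      intro s hs
      have hts : (0:ℝ) < t - s := by linarith [hs.2]
      have h2 : f s ≤ Θ * f t := (hmono _ _ ht2 hs.1.le).trans (hΘ t ht)
      calc f (t - s) * f s ≤ f (t - s) * (Θ * f t) :=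
            mul_le_mul_of_nonneg_left h2 (hpos _ hts).le
        _ = Θ * f t * f (t - s) := by ring
    rw [integral_const_mul, hreflint] at h1
    exact h1.trans (mul_le_mul_of_nonneg_left h3 hΘft)
  refine ⟨hlow, ?_⟩
  rw [hsplit]
  nlinarith [hA, hB]
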